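/- Let $n \ge 2$, $a \in \mathbb{R}^n$ with all $a_i > 0$ and $\sum_{i=1}^n a_i = 1$, and $0 < \alpha < \beta$. Suppose $\omega \in C^2(\alpha, \beta)$ is such that $u(x) = \omega\left(\frac12\sum_i a_i x_i^2\right)$ satisfies $\Delta u = 1$ on $\{x : \alpha < \frac12\sum_i a_i x_i^2 < \beta\}$, and $\omega''$ is not identically zero on $(\alpha,\beta)$. Then $a_1 = a_2 = \cdots = a_n = \frac{1}{n}$. -/

import Mathlib

open Finset

/-- The Hessian matrix of `u : ℝⁿ → ℝ` at `x`. -/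
noncomputable def hess {n : ℕ} (u : (Fin n → ℝ) → ℝ) (x : Fin n → ℝ) :
    Matrix (Fin n) (Fin n) ℝ :=
  fun i j => fderiv ℝ (fun y => fderiv ℝ u y (Pi.single j 1)) x (Pi.single i 1)

/-- If `u(x) = ω(½∑aᵢxᵢ²)` (with `∑aᵢ = 1`, all `aᵢ > 0`) satisfies `Δu = 1` on the
generalized annulus `{α < ½∑aᵢxᵢ² < β}` and `ω''` is not identically zero there, then all
`aᵢ = 1/n`. -/
theorem stmt_16 (n : ℕ) (hn : 2 ≤ n)
    (a : Fin n → ℝ) (hpos : ∀ i, 0 < a i) (hsum : ∑ i, a i = 1)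
    (α β : ℝ) (hαβ : 0 < α) (hβ : α < β)
    (ω : ℝ → ℝ) (hω : ContDiffOn ℝ 2 ω (Set.Ioo α β))
    (hω'' : ∃ s ∈ Set.Ioo α β, deriv (deriv ω) s ≠ 0)
    (u : (Fin n → ℝ) → ℝ)
    (hu : ∀ x, u x = ω ((1 : ℝ) / 2 * ∑ i, a i * x i ^ 2))
    (hlap : ∀ x : Fin n → ℝ,
      (1 : ℝ) / 2 * ∑ i, a i * x i ^ 2 ∈ Set.Ioo α β → ∑ i, hess u x i i = 1) :
    ∀ i, a i = 1 / n := by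
  set s : (Fin n → ℝ) → ℝ := fun x => (1 : ℝ) / 2 * ∑ i, a i * x i ^ 2 with hs_def
  -- derivative of s
  have hsL : ∀ x : Fin n → ℝ, HasFDerivAt s
      (∑ i, (a i * x i) • (ContinuousLinearMap.proj i : (Fin n → ℝ) →L[ℝ] ℝ)) x := by
    intro x
    have h0 : s = fun y : Fin n → ℝ => ∑ i, (a i / 2) * (y i * y i) := by
      funext y
      rw [hs_def]
      simp only [Finset.mul_sum]
      exact Finset.sum_congr rfl fun i _ => by ring
    rw [h0]
    refine HasFDerivAt.fun_sum fun i _ => ?_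
    have h1 : HasFDerivAt (fun y : Fin n → ℝ => y i)
        (ContinuousLinearMap.proj i : (Fin n → ℝ) →L[ℝ] ℝ) x :=
      hasFDerivAt_apply (𝕜 := ℝ) i x
    have h2 := (h1.fun_mul h1).const_mul (a i / 2)
    convert h2 using 1
    ext y
    simp [smul_smul]
    ext z
    simp
    ring
  have hLapp : ∀ (x : Fin n → ℝ) (j : Fin n),
      (∑ i, (a i * x i) • (ContinuousLinearMap.proj i : (Fin n → ℝ) →L[ℝ] ℝ))
        (Pi.single j 1) = a j * x j := by
    intro x j
    rw [ContinuousLinearMap.sum_apply]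
    simp [Pi.single_apply]
  have hΩ : IsOpen {x : Fin n → ℝ | s x ∈ Set.Ioo α β} := by
    have hcont : Continuous s := by
      rw [hs_def]
      exact continuous_const.mul
        (continuous_finset_sum _ fun i _ => continuous_const.mul ((continuous_apply i).pow 2))
    exact isOpen_Ioo.preimage hcont
  have hω1 : ∀ t ∈ Set.Ioo α β, HasDerivAt ω (deriv ω t) t := fun t ht =>
    ((hω.differentiableOn (by norm_num)).differentiableAt (isOpen_Ioo.mem_nhds ht)).hasDerivAt
  have hω2 : ContDiffOn ℝ 1 (deriv ω) (Set.Ioo α β) :=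
    hω.deriv_of_isOpen isOpen_Ioo (by norm_num)
  have hω2' : ∀ t ∈ Set.Ioo α β, HasDerivAt (deriv ω) (deriv (deriv ω) t) t := fun t ht =>
    ((hω2.differentiableOn one_ne_zero).differentiableAt (isOpen_Ioo.mem_nhds ht)).hasDerivAt
  have hueq : u = fun y => ω (s y) := funext fun x => by rw [hu x]
  have hux : ∀ x, s x ∈ Set.Ioo α β → HasFDerivAt u
      (deriv ω (s x) • (∑ i, (a i * x i) •
        (ContinuousLinearMap.proj i : (Fin n → ℝ) →L[ℝ] ℝ))) x := by
    intro x hx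
    rw [hueq]
    exact (hω1 _ hx).comp_hasFDerivAt x (hsL x)
  have hfderiv_app : ∀ x, s x ∈ Set.Ioo α β → ∀ j : Fin n,
      fderiv ℝ u x (Pi.single j 1) = deriv ω (s x) * (a j * x j) := by
    intro x hx j
    rw [(hux x hx).fderiv, ContinuousLinearMap.smul_apply, hLapp x j, smul_eq_mul]
  have hhess : ∀ x, s x ∈ Set.Ioo α β → ∀ j : Fin n,
      hess u x j j = deriv ω (s x) * a j + deriv (deriv ω) (s x) * (a j * x j) ^ 2 := by
    intro x hx j
    have heq : (fun y => fderiv ℝ u y (Pi.single j 1)) =ᶠ[nhds x]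
        (fun y => deriv ω (s y) * (a j * y j)) := by
      filter_upwards [hΩ.mem_nhds hx] with y hy
      exact hfderiv_app y hy j
    have h1 : HasFDerivAt (fun y => deriv ω (s y))
        (deriv (deriv ω) (s x) • (∑ i, (a i * x i) •
          (ContinuousLinearMap.proj i : (Fin n → ℝ) →L[ℝ] ℝ))) x :=
      (hω2' _ hx).comp_hasFDerivAt x (hsL x)
    have h2 : HasFDerivAt (fun y : Fin n → ℝ => a j * y j)
        ((a j) • (ContinuousLinearMap.proj j : (Fin n → ℝ) →L[ℝ] ℝ)) x :=
      (hasFDerivAt_apply (𝕜 := ℝ) j x).const_mul (a j)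
    have h3 := h1.fun_mul h2
    show fderiv ℝ (fun y => fderiv ℝ u y (Pi.single j 1)) x (Pi.single j 1) = _
    rw [heq.fderiv_eq, h3.fderiv]
    simp [hLapp x j, Pi.single_apply]
    ring
  obtain ⟨s0, hs0, hω''s0⟩ := hω''
  have hs0pos : 0 < s0 := lt_trans hαβ hs0.1
  have key : ∀ i, deriv ω s0 + deriv (deriv ω) s0 * (2 * s0 * a i) = 1 := by
    intro i
    have hai := hpos i
    set c := Real.sqrt (2 * s0 / a i) with hc
    have hc2 : c ^ 2 = 2 * s0 / a i := Real.sq_sqrt (by positivity)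
    set x : Fin n → ℝ := Pi.single i c with hx
    have hxsum : ∑ j, a j * x j ^ 2 = a i * c ^ 2 := by
      rw [hx, Finset.sum_eq_single i]
      · simp
      · intro b _ hb; simp [Pi.single_apply, hb]
      · intro h; exact absurd (Finset.mem_univ i) h
    have hsx : s x = s0 := by
      rw [hs_def]
      simp only [hxsum, hc2]
      field_simp
    have hmem : s x ∈ Set.Ioo α β := by rw [hsx]; exact hs0
    have hl := hlap x hmem
    rw [Finset.sum_congr rfl (fun j _ => hhess x hmem j)] at hl
    rw [hsx] at hl
    rw [Finset.sum_add_distrib, ← Finset.mul_sum, hsum, ← Finset.mul_sum] at hl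
    have hsq : ∑ j, (a j * x j) ^ 2 = 2 * s0 * a i := by
      rw [hx, Finset.sum_eq_single i]
      · rw [Pi.single_eq_same, mul_pow, hc2]
        field_simp
      · intro b _ hb; simp [Pi.single_apply, hb]
      · intro h; exact absurd (Finset.mem_univ i) h
    rw [hsq] at hl
    linarith
  have hconst : ∀ i j, a i = a j := by
    intro i j
    have hi := key i
    have hj := key j
    have h1 : deriv (deriv ω) s0 * (2 * s0 * a i) = deriv (deriv ω) s0 * (2 * s0 * a j) := by
      linarith
    have h2 := mul_left_cancel₀ hω''s0 h1
    have h3 : (2 * s0) ≠ 0 := by positivity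
    exact mul_left_cancel₀ h3 h2
  intro i
  have hsc : ∑ j, a j = (n : ℝ) * a i := by
    rw [Finset.sum_congr rfl fun j _ => hconst j i]
    rw [Finset.sum_const, Finset.card_univ, Fintype.card_fin, nsmul_eq_mul]
  rw [hsum] at hsc
  have hn0 : (n : ℝ) ≠ 0 := by
    have : (0 : ℝ) < n := by exact_mod_cast Nat.lt_of_lt_of_le (by norm_num) hn
    linarith
  field_simp
  linarith
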